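/- Let e, f ∈ A be invertible elements satisfying efe = fef, e·κ_e = κ_e·e = ν·κ_e, f·κ_f = κ_f·f = ν·κ_f, and κ_f·e·κ_f = ν⁻¹·κ_f. If ν ≠ λ, then the remaining Birman–Murakami–Wenzl defining relation κ_f·e⁻¹·κ_f = ν·κ_f follows; i.e., for ν ≠ λ the two relations κ_{i+1}e_iκ_{i+1} = ν⁻¹κ_{i+1} and κ_{i+1}e_i⁻¹κ_{i+1} = νκ_{i+1} are algebraically dependent. -/

import Mathlib

namespace BMWPaper

noncomputable section

/-- `κ_u := λ⁻¹ ν⁻¹ (q - u)(q⁻¹ + u)` for an invertible element `u` of a ℂ-algebra,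
where `λ := q - q⁻¹`. -/
def kap (q ν : ℂ) {A : Type*} [Ring A] [Algebra ℂ A] (u : Aˣ) : A :=
  ((q - q⁻¹)⁻¹ * ν⁻¹) • ((q • (1 : A) - (u : A)) * (q⁻¹ • (1 : A) + (u : A)))

/-- `μ := λ⁻¹ ν⁻¹ (q - ν)(q⁻¹ + ν)`. -/
def muBMW (q ν : ℂ) : ℂ := ((q - q⁻¹)⁻¹ * ν⁻¹) * ((q - ν) * (q⁻¹ + ν))

/-- A local BMW pair `(e, f)` of invertible elements of a ℂ-algebra `A`:
`efe = fef`, `e κ_e = κ_e e = ν κ_e`, `f κ_f = κ_f f = ν κ_f`,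
`κ_f e κ_f = ν⁻¹ κ_f` and `κ_f e⁻¹ κ_f = ν κ_f`. -/
def LocalBMWPair (q ν : ℂ) {A : Type*} [Ring A] [Algebra ℂ A] (e f : Aˣ) : Prop :=
  (e : A) * f * e = (f : A) * e * f ∧
  (e : A) * kap q ν e = ν • kap q ν e ∧
  kap q ν e * e = ν • kap q ν e ∧
  (f : A) * kap q ν f = ν • kap q ν f ∧
  kap q ν f * f = ν • kap q ν f ∧
  kap q ν f * e * kap q ν f = ν⁻¹ • kap q ν f ∧
  kap q ν f * (↑e⁻¹ : A) * kap q ν f = ν • kap q ν f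

set_option maxHeartbeats 1000000 in
/-- for `ν ≠ λ` the relation `κ_f e⁻¹ κ_f = ν κ_f` follows from the
other Birman–Murakami–Wenzl relations. -/
theorem stmt1 (q ν : ℂ) (hq0 : q ≠ 0) (hq1 : q ≠ 1) (hqm1 : q ≠ -1)
    (hν0 : ν ≠ 0) (hνq : ν ≠ q) (hνq' : ν ≠ -q⁻¹)
    (A : Type*) [Ring A] [Algebra ℂ A]
    (hnulam : ν ≠ q - q⁻¹)
    (e f : Aˣ)
    (hbraid : (e : A) * f * e = (f : A) * e * f)
    (he1 : (e : A) * kap q ν e = ν • kap q ν e)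
    (he2 : kap q ν e * e = ν • kap q ν e)
    (hf1 : (f : A) * kap q ν f = ν • kap q ν f)
    (hf2 : kap q ν f * f = ν • kap q ν f)
    (hfe : kap q ν f * e * kap q ν f = ν⁻¹ • kap q ν f) :
    kap q ν f * (↑e⁻¹ : A) * kap q ν f = ν • kap q ν f := by
  have hq2 : q * q⁻¹ = 1 := mul_inv_cancel₀ hq0
  have hν2 : ν * ν⁻¹ = 1 := mul_inv_cancel₀ hν0
  have hν2' : ν⁻¹ * ν = 1 := inv_mul_cancel₀ hν0
  have hlam : q - q⁻¹ ≠ 0 := by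
    intro h
    have h' : q = q⁻¹ := sub_eq_zero.mp h
    have h1 : q * q = 1 := by nth_rewrite 2 [h']; exact hq2
    have h2 : (q - 1) * (q + 1) = 0 := by linear_combination h1
    rcases mul_eq_zero.mp h2 with h3 | h3
    · exact hq1 (sub_eq_zero.mp h3)
    · exact hqm1 (eq_neg_of_add_eq_zero_left h3)
  have hc : (q - q⁻¹) * ν ≠ 0 := mul_ne_zero hlam hν0
  have cancel : ∀ (a : ℂ) (x y : A), a ≠ 0 → a • x = a • y → x = y := by
    intro a x y ha h
    have h2 := congrArg (fun z : A => a⁻¹ • z) h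
    simpa [inv_smul_smul₀ ha] using h2
  have expand : ∀ u : Aˣ, ((q - q⁻¹) * ν) • kap q ν u
      = 1 + (q - q⁻¹) • (u : A) - (u : A) * u := by
    intro u
    simp only [kap, smul_smul]
    have hs : (q - q⁻¹) * ν * ((q - q⁻¹)⁻¹ * ν⁻¹) = 1 := by
      rw [show (q - q⁻¹) * ν * ((q - q⁻¹)⁻¹ * ν⁻¹)
          = ((q - q⁻¹) * (q - q⁻¹)⁻¹) * (ν * ν⁻¹) from by ring,
        mul_inv_cancel₀ hlam, mul_inv_cancel₀ hν0, one_mul]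
    rw [hs, one_smul]
    simp only [sub_mul, mul_add, smul_mul_assoc, mul_smul_comm, one_mul, mul_one,
      smul_smul, one_smul]
    match_scalars <;> (field_simp; try ring)
  obtain ⟨P, hP⟩ : ∃ P : A, P = ((q - q⁻¹) * ν) • kap q ν f := ⟨_, rfl⟩
  obtain ⟨Q, hQ⟩ : ∃ Q : A, Q = ((q - q⁻¹) * ν) • kap q ν e := ⟨_, rfl⟩
  have hPexp : P = 1 + (q - q⁻¹) • (f : A) - (f : A) * f := by rw [hP]; exact expand f
  have hQexp : Q = 1 + (q - q⁻¹) • (e : A) - (e : A) * e := by rw [hQ]; exact expand e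
  have hQe : (e : A) * Q = ν • Q := by
    rw [hQ, mul_smul_comm, he1, smul_comm]
  have hPf1 : (f : A) * P = ν • P := by rw [hP, mul_smul_comm, hf1, smul_comm]
  have hPf2 : P * (f : A) = ν • P := by rw [hP, smul_mul_assoc, hf2, smul_comm]
  have hPfinv : (↑f⁻¹ : A) * P = ν⁻¹ • P := by
    refine cancel ν _ _ hν0 ?_
    calc ν • ((↑f⁻¹ : A) * P) = (↑f⁻¹ : A) * (ν • P) := by rw [mul_smul_comm]
      _ = (↑f⁻¹ : A) * ((f : A) * P) := by rw [hPf1]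
      _ = P := Units.inv_mul_cancel_left f P
      _ = ν • (ν⁻¹ • P) := by rw [smul_smul, hν2, one_smul]
  have hPeP : P * (e : A) * P = (q - q⁻¹) • P := by
    rw [hP, smul_mul_assoc, smul_mul_assoc, mul_smul_comm, hfe, smul_smul, smul_smul,
      smul_smul]
    congr 1
    field_simp
  have hPP : P * P = ((1 : ℂ) + (q - q⁻¹) * ν - ν * ν) • P := by
    calc P * P = P * (1 + (q - q⁻¹) • (f : A) - (f : A) * f) := by rw [← hPexp]
      _ = P + (q - q⁻¹) • (P * (f : A)) - P * (f : A) * (f : A) := by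
          rw [mul_sub, mul_add, mul_one, mul_smul_comm, mul_assoc]
      _ = P + (q - q⁻¹) • (ν • P) - ν • P * (f : A) := by rw [hPf2]
      _ = P + (q - q⁻¹) • (ν • P) - ν • (ν • P) := by rw [smul_mul_assoc, hPf2]
      _ = ((1 : ℂ) + (q - q⁻¹) * ν - ν * ν) • P := by module
  have heinv : (↑e⁻¹ : A) = (e : A) - (q - q⁻¹) • 1 + ν⁻¹ • Q := by
    have hx : (e : A) * ((e : A) - (q - q⁻¹) • 1 + ν⁻¹ • Q) = 1 := by
      rw [mul_add, mul_sub, mul_smul_comm, mul_one, mul_smul_comm, hQe, smul_smul, hν2',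
        one_smul, hQexp]
      module
    calc (↑e⁻¹ : A) = ↑e⁻¹ * ((e : A) * ((e : A) - (q - q⁻¹) • 1 + ν⁻¹ • Q)) := by
          rw [hx, mul_one]
      _ = (e : A) - (q - q⁻¹) • 1 + ν⁻¹ • Q := Units.inv_mul_cancel_left e _
  have h8 : (↑e⁻¹ : A) * (f : A) * (e : A) = (f : A) * (e : A) * (↑f⁻¹ : A) := by
    have h := congrArg (fun x : A => (↑e⁻¹ : A) * x * (↑f⁻¹ : A)) hbraid
    simpa only [mul_assoc, Units.mul_inv_cancel_left, Units.inv_mul_cancel_left,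
      Units.mul_inv, Units.inv_mul, mul_one, one_mul] using h.symm
  have hconj : (↑e⁻¹ : A) * P * (e : A) = (f : A) * Q * (↑f⁻¹ : A) := by
    have hL : (↑e⁻¹ : A) * P * (e : A)
        = 1 + (q - q⁻¹) • ((↑e⁻¹ : A) * (f : A) * (e : A))
          - ((↑e⁻¹ : A) * (f : A) * (e : A)) * ((↑e⁻¹ : A) * (f : A) * (e : A)) := by
      have hsq : ((↑e⁻¹ : A) * (f : A) * (e : A)) * ((↑e⁻¹ : A) * (f : A) * (e : A))
          = (↑e⁻¹ : A) * ((f : A) * ((f : A) * (e : A))) := by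
        simp only [mul_assoc, Units.mul_inv_cancel_left]
      rw [hPexp, hsq]
      simp only [mul_add, mul_sub, add_mul, sub_mul, mul_one, one_mul, mul_smul_comm,
        smul_mul_assoc, mul_assoc, Units.inv_mul, Units.inv_mul_cancel_left]
    have hR : (f : A) * Q * (↑f⁻¹ : A)
        = 1 + (q - q⁻¹) • ((f : A) * (e : A) * (↑f⁻¹ : A))
          - ((f : A) * (e : A) * (↑f⁻¹ : A)) * ((f : A) * (e : A) * (↑f⁻¹ : A)) := by
      have hsq : ((f : A) * (e : A) * (↑f⁻¹ : A)) * ((f : A) * (e : A) * (↑f⁻¹ : A))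
          = (f : A) * ((e : A) * ((e : A) * (↑f⁻¹ : A))) := by
        simp only [mul_assoc, Units.inv_mul_cancel_left]
      rw [hQexp, hsq]
      simp only [mul_add, mul_sub, add_mul, sub_mul, mul_one, one_mul, mul_smul_comm,
        smul_mul_assoc, mul_assoc, Units.mul_inv, Units.mul_inv_cancel_left]
    rw [hL, hR, h8]
  have halpha : P * (↑e⁻¹ : A) * P * (e : A) * P = P * Q * P := by
    have h1 : P * (↑e⁻¹ : A) * P * (e : A) * P = P * ((↑e⁻¹ : A) * P * (e : A)) * P := by
      simp only [mul_assoc]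
    rw [h1, hconj]
    calc P * ((f : A) * Q * (↑f⁻¹ : A)) * P
        = P * (f : A) * Q * ((↑f⁻¹ : A) * P) := by simp only [mul_assoc]
      _ = ν • P * Q * (ν⁻¹ • P) := by rw [hPf2, hPfinv]
      _ = (ν * ν⁻¹) • (P * Q * P) := by
          rw [smul_mul_assoc, smul_mul_assoc, mul_smul_comm, smul_smul]
      _ = P * Q * P := by rw [hν2, one_smul]
  have hbeta : P * (↑e⁻¹ : A) * P
      = (q - q⁻¹) • P - ((q - q⁻¹) * ((1 : ℂ) + (q - q⁻¹) * ν - ν * ν)) • P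
        + ν⁻¹ • (P * Q * P) := by
    rw [heinv]
    have h2 : P * ((e : A) - (q - q⁻¹) • 1 + ν⁻¹ • Q) * P
        = P * (e : A) * P - (q - q⁻¹) • (P * P) + ν⁻¹ • (P * Q * P) := by
      simp only [mul_add, mul_sub, add_mul, sub_mul, mul_smul_comm, smul_mul_assoc, mul_one]
    rw [h2, hPeP, hPP, smul_smul]
  have hgamma : P * (↑e⁻¹ : A) * P * (e : A) * P
      = ((q - q⁻¹) * (q - q⁻¹)) • P
        - ((q - q⁻¹) * ((1 : ℂ) + (q - q⁻¹) * ν - ν * ν) * (q - q⁻¹)) • P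
        + ((q - q⁻¹) * ν⁻¹) • (P * Q * P) := by
    rw [hbeta]
    simp only [add_mul, sub_mul, smul_mul_assoc]
    rw [hPeP]
    have h3 : P * Q * P * (e : A) * P = (q - q⁻¹) • (P * Q * P) := by
      have h4 : P * Q * P * (e : A) * P = P * Q * (P * (e : A) * P) := by
        simp only [mul_assoc]
      rw [h4, hPeP, mul_smul_comm]
    rw [h3]
    module
  have hb : (1 : ℂ) - (q - q⁻¹) * ν⁻¹ ≠ 0 := by
    intro hzero
    apply hnulam
    have h1 : ν - (q - q⁻¹) = 0 := by
      linear_combination ν * hzero + (q - q⁻¹) * hν2'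
    exact sub_eq_zero.mp h1
  have hT : P * Q * P = ((q - q⁻¹) * (q - q⁻¹) * (ν * ν)) • P := by
    have h := halpha.symm.trans hgamma
    have h2 : ((1 : ℂ) - (q - q⁻¹) * ν⁻¹) • (P * Q * P)
        = ((q - q⁻¹) * (q - q⁻¹)
            - (q - q⁻¹) * ((1 : ℂ) + (q - q⁻¹) * ν - ν * ν) * (q - q⁻¹)) • P := by
      rw [sub_smul, one_smul]
      nth_rewrite 1 [h]
      module
    refine cancel ((1 : ℂ) - (q - q⁻¹) * ν⁻¹) _ _ hb ?_
    rw [h2, smul_smul]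
    congr 1
    field_simp
    ring
  have hs : (q - q⁻¹) - (q - q⁻¹) * ((1 : ℂ) + (q - q⁻¹) * ν - ν * ν)
      + ν⁻¹ * ((q - q⁻¹) * (q - q⁻¹) * (ν * ν)) = (q - q⁻¹) * (ν * ν) := by
    field_simp
    ring
  have hPeinvP : P * (↑e⁻¹ : A) * P = ((q - q⁻¹) * (ν * ν)) • P := by
    rw [hbeta, hT, smul_smul, ← hs]
    module
  have h1 : P * (↑e⁻¹ : A) * P
      = ((q - q⁻¹) * ν * ((q - q⁻¹) * ν)) • (kap q ν f * (↑e⁻¹ : A) * kap q ν f) := by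
    rw [hP]
    simp only [smul_mul_assoc, mul_smul_comm, smul_smul]
  have h2 : ((q - q⁻¹) * (ν * ν)) • P
      = ((q - q⁻¹) * ν * ((q - q⁻¹) * ν)) • (ν • kap q ν f) := by
    rw [hP, smul_smul, smul_smul]
    congr 1
    ring
  refine cancel ((q - q⁻¹) * ν * ((q - q⁻¹) * ν)) _ _ (mul_ne_zero hc hc) ?_
  rw [← h1, ← h2]
  exact hPeinvP

end

end BMWPaper
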